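/- Let σ, τ : [0, ∞) → [0, ∞) be Lebesgue measurable functions that are locally integrable (integrable on [0, s] for every 0 < s < ∞). Let ψ : ℝⁿ ⇉ ℝⁿ satisfy the (Γ₁)-condition, let V : ℝⁿ → ℝⁿ be L-Lipschitz continuous and η-strongly monotone, let μ > 0, and assume there exists ρ > 0 such that ‖P_{ψ(r)}(y) − P_{ψ(s)}(y)‖ ≤ ρ‖r − s‖ for all y, r, s ∈ ℝⁿ. Then for any a₀, b₀ ∈ ℝⁿ, the second-order dynamical system ẍ(t) + σ(t)ẋ(t) + τ(t)(V(x(t)) − P_{ψ(x(t))}(V(x(t)) − μ x(t))) = 0, x(0) = a₀, ẋ(0) = b₀, has a unique strong global solution; that is, there is a unique x : [0, ∞) → ℝⁿ such that x and ẋ are absolutely continuous on every compact interval [0, q], the differential equation holds for almost every t ∈ [0, ∞), and x(0) = a₀, ẋ(0) = b₀. -/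

import Mathlib

open MeasureTheory Set intervalIntegral


open scoped RealInnerProductSpace
open MeasureTheory

/- Metric projection onto a set `C ⊆ ℝⁿ`: when `C` is nonempty, closed and convex this is
the unique nearest point of `C`. -/
open Classical in
noncomputable def metricProj {d : ℕ} (C : Set (EuclideanSpace ℝ (Fin d)))
    (x : EuclideanSpace ℝ (Fin d)) : EuclideanSpace ℝ (Fin d) :=
  if h : ∃ y, y ∈ C ∧ ∀ z ∈ C, ‖x - y‖ ≤ ‖x - z‖ then h.choose else x

section Proj
variable {d : ℕ} {C : Set (EuclideanSpace ℝ (Fin d))}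

theorem metricProj_spec (hne : C.Nonempty) (hcl : IsClosed C) (hco : Convex ℝ C)
    (x : EuclideanSpace ℝ (Fin d)) :
    metricProj C x ∈ C ∧ ∀ z ∈ C, ‖x - metricProj C x‖ ≤ ‖x - z‖ := by
  obtain ⟨v, hvC, hv⟩ := exists_norm_eq_iInf_of_complete_convex hne hcl.isComplete hco x
  have hex : ∃ y, y ∈ C ∧ ∀ z ∈ C, ‖x - y‖ ≤ ‖x - z‖ := by
    refine ⟨v, hvC, fun z hz => ?_⟩
    rw [hv]
    exact ciInf_le ⟨0, Set.forall_mem_range.2 fun _ => norm_nonneg _⟩ (⟨z, hz⟩ : C)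
  have : metricProj C x = hex.choose := by
    rw [metricProj, dif_pos hex]
  rw [this]
  exact ⟨hex.choose_spec.1, hex.choose_spec.2⟩

theorem metricProj_inner (hne : C.Nonempty) (hcl : IsClosed C) (hco : Convex ℝ C)
    (x : EuclideanSpace ℝ (Fin d)) :
    ∀ z ∈ C, ⟪x - metricProj C x, z - metricProj C x⟫ ≤ 0 := by
  obtain ⟨hmem, hmin⟩ := metricProj_spec hne hcl hco x
  rw [← norm_eq_iInf_iff_real_inner_le_zero hco hmem]
  haveI : Nonempty C := hne.to_subtype
  apply le_antisymm
  · exact le_ciInf fun w => hmin w w.2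
  · exact ciInf_le ⟨0, Set.forall_mem_range.2 fun _ => norm_nonneg _⟩
      (⟨metricProj C x, hmem⟩ : C)

theorem metricProj_nonexpansive (hne : C.Nonempty) (hcl : IsClosed C) (hco : Convex ℝ C)
    (x y : EuclideanSpace ℝ (Fin d)) :
    ‖metricProj C x - metricProj C y‖ ≤ ‖x - y‖ := by
  set p := metricProj C x with hp
  set q := metricProj C y with hq
  have hpC : p ∈ C := (metricProj_spec hne hcl hco x).1
  have hqC : q ∈ C := (metricProj_spec hne hcl hco y).1
  have h1 : ⟪x - p, q - p⟫ ≤ 0 := metricProj_inner hne hcl hco x q hqC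
  have h2 : ⟪y - q, p - q⟫ ≤ 0 := metricProj_inner hne hcl hco y p hpC
  have e1 : ⟪y - q, p - q⟫ = ⟪q - y, q - p⟫ := by
    rw [← inner_neg_neg (𝕜 := ℝ), neg_sub, neg_sub]
  have e2 : ⟪x - p, q - p⟫ + ⟪q - y, q - p⟫ = ⟪x - y, q - p⟫ + ⟪q - p, q - p⟫ := by
    rw [← inner_add_left, ← inner_add_left]
    congr 1
    abel
  have key : ‖q - p‖ ^ 2 ≤ ⟪y - x, q - p⟫ := by
    have h3 : ⟪x - y, q - p⟫ + ‖q - p‖ ^ 2 ≤ 0 := by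
      rw [← real_inner_self_eq_norm_sq, ← e2]
      rw [e1] at h2
      linarith
    have h4 : ⟪y - x, q - p⟫ = -⟪x - y, q - p⟫ := by
      rw [← inner_neg_left, neg_sub]
    linarith
  have h5 : ⟪y - x, q - p⟫ ≤ ‖y - x‖ * ‖q - p‖ := real_inner_le_norm _ _
  have h6 : ‖q - p‖ ^ 2 ≤ ‖y - x‖ * ‖q - p‖ := key.trans h5
  have h7 : ‖q - p‖ ≤ ‖y - x‖ := by
    nlinarith [norm_nonneg (q - p), norm_nonneg (y - x)]
  calc ‖p - q‖ = ‖q - p‖ := by rw [norm_sub_rev]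
    _ ≤ ‖y - x‖ := h7
    _ = ‖x - y‖ := by rw [norm_sub_rev]

end Proj

set_option linter.unusedSectionVars false

section Carath
variable {W : Type*} [NormedAddCommGroup W] [NormedSpace ℝ W] [CompleteSpace W]
variable (Φ : ℝ → W → W) (k : ℝ → ℝ) (B : ℝ)
variable (hkint : ∀ a b : ℝ, IntegrableOn k (Set.Icc a b))
  (hmeas : ∀ (u : ℝ → W) (a b : ℝ), ContinuousOn u (Set.Icc a b) →
    AEStronglyMeasurable (fun s => Φ s (u s)) (volume.restrict (Set.Icc a b)))
  (hlip : ∀ s, 0 ≤ s → ∀ y y', ‖Φ s y - Φ s y'‖ ≤ k s * ‖y - y'‖)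
  (hB : ∀ s, 0 ≤ s → ‖Φ s 0‖ ≤ k s * B)
  (hk0 : ∀ s, 0 ≤ k s)

include hkint hmeas hlip hB hk0 in
theorem phi_integrableOn
    {u : ℝ → W} {a b : ℝ} (ha : 0 ≤ a) (hu : ContinuousOn u (Set.Icc a b)) :
    IntegrableOn (fun s => Φ s (u s)) (Set.Icc a b) := by
  obtain ⟨M, hM⟩ := isCompact_Icc.exists_bound_of_continuousOn hu
  refine Integrable.mono' ((hkint a b).mul_const (M + B)) (hmeas u a b hu) ?_
  refine (MeasureTheory.ae_restrict_iff' measurableSet_Icc).2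
    (Filter.Eventually.of_forall fun s hs => ?_)
  have hs0 : (0:ℝ) ≤ s := ha.trans hs.1
  have h3 : ‖Φ s (u s)‖ ≤ ‖Φ s (u s) - Φ s 0‖ + ‖Φ s 0‖ := by
    simpa using norm_add_le (Φ s (u s) - Φ s 0) (Φ s 0)
  have h4 := hlip s hs0 (u s) 0
  rw [sub_zero] at h4
  have h5 := hB s hs0
  have h6 : k s * ‖u s‖ ≤ k s * M := by
    have := hM s hs
    have := hk0 s
    nlinarith
  calc ‖Φ s (u s)‖ ≤ k s * ‖u s‖ + k s * B := by linarith
    _ ≤ k s * M + k s * B := by linarith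
    _ = k s * (M + B) := by ring

include hkint hmeas hlip hB hk0 in
theorem carath_loc_ex {a b : ℝ} (ha : 0 ≤ a) (hab : a ≤ b)
    (hsmall : (∫ s in a..b, k s) ≤ 1/2) (u₀ : W) :
    ∃ u : ℝ → W, Continuous u ∧ ∀ t ∈ Set.Icc a b, u t = u₀ + ∫ s in a..t, Φ s (u s) := by
  haveI : Nonempty C(Set.Icc a b, W) := ⟨ContinuousMap.const _ 0⟩
  set ext : C(Set.Icc a b, W) → ℝ → W := fun f => f ∘ Set.projIcc a b hab with hext
  have hext_cont : ∀ f : C(Set.Icc a b, W), Continuous (ext f) := fun f =>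
    f.continuous.comp continuous_projIcc
  have hext_mem : ∀ (f : C(Set.Icc a b, W)) (t : ℝ) (ht : t ∈ Set.Icc a b),
      ext f t = f ⟨t, ht⟩ := by
    intro f t ht
    simp only [hext, Function.comp_apply, Set.projIcc_of_mem hab ht]
  set G : C(Set.Icc a b, W) → ℝ → W :=
    fun f => (Set.Icc a b).indicator (fun s => Φ s (ext f s)) with hG
  have hGint : ∀ f, Integrable (G f) volume := by
    intro f
    exact (integrable_indicator_iff measurableSet_Icc).2
      (phi_integrableOn Φ k B hkint hmeas hlip hB hk0 ha (hext_cont f).continuousOn)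
  set T : C(Set.Icc a b, W) → C(Set.Icc a b, W) := fun f =>
    ⟨fun t => u₀ + ∫ s in a..(t:ℝ), G f s,
      (continuous_const.add ((hGint f).continuous_primitive a)).comp continuous_subtype_val⟩
    with hT
  -- pointwise bound on the difference of integrands
  have hGdiff : ∀ f g : C(Set.Icc a b, W), ∀ s : ℝ,
      ‖G f s - G g s‖ ≤ (Set.Icc a b).indicator k s * dist f g := by
    intro f g s
    by_cases hs : s ∈ Set.Icc a b
    · simp only [hG]
      rw [Set.indicator_of_mem hs, Set.indicator_of_mem hs, Set.indicator_of_mem hs]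
      have hs0 : (0:ℝ) ≤ s := ha.trans hs.1
      refine (hlip s hs0 _ _).trans ?_
      have hd : ‖ext f s - ext g s‖ ≤ dist f g := by
        rw [hext_mem f s hs, hext_mem g s hs, ← dist_eq_norm]
        exact ContinuousMap.dist_apply_le_dist _
      have := hk0 s
      nlinarith [dist_nonneg (x := f) (y := g)]
    · simp only [hG]
      rw [Set.indicator_of_notMem hs, Set.indicator_of_notMem hs, Set.indicator_of_notMem hs]
      simp [dist_nonneg]
  have hkind_int : Integrable ((Set.Icc a b).indicator k) volume :=
    (integrable_indicator_iff measurableSet_Icc).2 (hkint a b)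
  have hkind_nonneg : ∀ s, 0 ≤ (Set.Icc a b).indicator k s := fun s =>
    Set.indicator_nonneg (fun s _ => hk0 s) s
  have hkind_le : ∀ t ∈ Set.Icc a b, (∫ s in a..t, (Set.Icc a b).indicator k s) ≤ 1/2 := by
    intro t ht
    have h1 : (∫ s in a..t, (Set.Icc a b).indicator k s)
        ≤ ∫ s in a..b, (Set.Icc a b).indicator k s := by
      refine intervalIntegral.integral_mono_interval le_rfl ht.1 ht.2 ?_ ?_
      · exact Filter.Eventually.of_forall fun s => hkind_nonneg s
      · exact hkind_int.intervalIntegrable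
    have h2 : (∫ s in a..b, (Set.Icc a b).indicator k s) = ∫ s in a..b, k s := by
      refine intervalIntegral.integral_congr fun s hs => ?_
      rw [Set.uIcc_of_le hab] at hs
      exact Set.indicator_of_mem hs k
    linarith
  have hTlip : ∀ f g : C(Set.Icc a b, W), dist (T f) (T g) ≤ (1/2 : ℝ) * dist f g := by
    intro f g
    rw [ContinuousMap.dist_le (by positivity)]
    intro t
    rw [dist_eq_norm]
    have hsub : (T f) t - (T g) t = ∫ s in a..(t:ℝ), (G f s - G g s) := by
      show (u₀ + ∫ s in a..(t:ℝ), G f s) - (u₀ + ∫ s in a..(t:ℝ), G g s) = _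
      rw [intervalIntegral.integral_sub (hGint f).intervalIntegrable
        (hGint g).intervalIntegrable]
      abel
    rw [hsub]
    have hbd : ‖∫ s in a..(t:ℝ), (G f s - G g s)‖
        ≤ |∫ s in a..(t:ℝ), (Set.Icc a b).indicator k s * dist f g| := by
      refine intervalIntegral.norm_integral_le_abs_of_norm_le
        (Filter.Eventually.of_forall fun s => hGdiff f g s) ?_
      exact (hkind_int.mul_const _).intervalIntegrable
    refine hbd.trans ?_
    have hnn : 0 ≤ ∫ s in a..(t:ℝ), (Set.Icc a b).indicator k s * dist f g := by
      refine intervalIntegral.integral_nonneg t.2.1 fun s _ => ?_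
      exact mul_nonneg (hkind_nonneg s) dist_nonneg
    rw [abs_of_nonneg hnn, intervalIntegral.integral_mul_const]
    have := hkind_le t t.2
    nlinarith [dist_nonneg (x := f) (y := g)]
  have hcontr : ContractingWith (1/2 : NNReal) T := by
    constructor
    · have h : ((1/2 : NNReal) : ℝ) < 1 := by norm_num
      exact_mod_cast h
    · refine LipschitzWith.of_dist_le_mul fun f g => ?_
      have : ((1/2 : NNReal) : ℝ) = (1/2 : ℝ) := by norm_num
      rw [this]
      exact hTlip f g
  set uf := ContractingWith.fixedPoint T hcontr with huf
  have hfix : T uf = uf := hcontr.fixedPoint_isFixedPt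
  refine ⟨ext uf, hext_cont uf, fun t ht => ?_⟩
  have h1 : ext uf t = uf ⟨t, ht⟩ := hext_mem uf t ht
  have h2 : uf ⟨t, ht⟩ = (T uf) ⟨t, ht⟩ := by rw [hfix]
  have h3 : (T uf) ⟨t, ht⟩ = u₀ + ∫ s in a..t, G uf s := rfl
  rw [h1, h2, h3]
  congr 1
  refine intervalIntegral.integral_congr fun s hs => ?_
  rw [Set.uIcc_of_le ht.1] at hs
  have hsI : s ∈ Set.Icc a b := ⟨hs.1, hs.2.trans ht.2⟩
  exact Set.indicator_of_mem hsI _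

include hkint hmeas hlip hB hk0 in
theorem carath_loc_uniq {a b : ℝ} (ha : 0 ≤ a) (hab : a ≤ b)
    (hsmall : (∫ s in a..b, k s) ≤ 1/2) (u₀ : W) {u u' : ℝ → W}
    (hu : ContinuousOn u (Set.Icc a b)) (hu' : ContinuousOn u' (Set.Icc a b))
    (h1 : ∀ t ∈ Set.Icc a b, u t = u₀ + ∫ s in a..t, Φ s (u s))
    (h2 : ∀ t ∈ Set.Icc a b, u' t = u₀ + ∫ s in a..t, Φ s (u' s)) :
    Set.EqOn u u' (Set.Icc a b) := by
  have hD : ContinuousOn (fun t => ‖u t - u' t‖) (Set.Icc a b) := (hu.sub hu').norm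
  obtain ⟨t₀, ht₀I, hmax⟩ := isCompact_Icc.exists_isMaxOn (Set.nonempty_Icc.2 hab) hD
  set M := ‖u t₀ - u' t₀‖ with hM
  have hMnn : 0 ≤ M := norm_nonneg _
  have hint1 : IntegrableOn (fun s => Φ s (u s)) (Set.Icc a b) :=
    phi_integrableOn Φ k B hkint hmeas hlip hB hk0 ha hu
  have hint2 : IntegrableOn (fun s => Φ s (u' s)) (Set.Icc a b) :=
    phi_integrableOn Φ k B hkint hmeas hlip hB hk0 ha hu'
  have hii1 : IntervalIntegrable (fun s => Φ s (u s)) volume a t₀ := by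
    rw [intervalIntegrable_iff_integrableOn_Ioc_of_le ht₀I.1]
    exact (hint1.mono_set (Set.Ioc_subset_Icc_self.trans (Set.Icc_subset_Icc_right ht₀I.2)))
  have hii2 : IntervalIntegrable (fun s => Φ s (u' s)) volume a t₀ := by
    rw [intervalIntegrable_iff_integrableOn_Ioc_of_le ht₀I.1]
    exact (hint2.mono_set (Set.Ioc_subset_Icc_self.trans (Set.Icc_subset_Icc_right ht₀I.2)))
  have key : M ≤ 1/2 * M := by
    have hsub : u t₀ - u' t₀ = ∫ s in a..t₀, (Φ s (u s) - Φ s (u' s)) := by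
      rw [h1 t₀ ht₀I, h2 t₀ ht₀I, intervalIntegral.integral_sub hii1 hii2]
      abel
    have hbd : ‖u t₀ - u' t₀‖ ≤ |∫ s in a..t₀, k s * M| := by
      rw [hsub]
      refine intervalIntegral.norm_integral_le_abs_of_norm_le ?_ ?_
      · refine (MeasureTheory.ae_restrict_iff' measurableSet_uIoc).2
          (Filter.Eventually.of_forall fun s hs => ?_)
        rw [Set.uIoc_of_le ht₀I.1] at hs
        have hsI : s ∈ Set.Icc a b := ⟨hs.1.le, hs.2.trans ht₀I.2⟩
        have hs0 : (0:ℝ) ≤ s := ha.trans hsI.1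
        refine (hlip s hs0 _ _).trans ?_
        have h7 : ‖u s - u' s‖ ≤ ‖u t₀ - u' t₀‖ := hmax hsI
        have h8 := hk0 s
        simp only [hM]
        nlinarith
      · have : IntegrableOn (fun s => k s * M) (Set.Icc a t₀) :=
          ((hkint a t₀).mul_const M)
        rw [intervalIntegrable_iff_integrableOn_Ioc_of_le ht₀I.1]
        exact this.mono_set Set.Ioc_subset_Icc_self
    have hnn : 0 ≤ ∫ s in a..t₀, k s * M := by
      refine intervalIntegral.integral_nonneg ht₀I.1 fun s _ => ?_
      exact mul_nonneg (hk0 s) hMnn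
    rw [abs_of_nonneg hnn, intervalIntegral.integral_mul_const] at hbd
    have hmono : (∫ s in a..t₀, k s) ≤ ∫ s in a..b, k s := by
      refine intervalIntegral.integral_mono_interval le_rfl ht₀I.1 ht₀I.2 ?_ ?_
      · exact Filter.Eventually.of_forall fun s => hk0 s
      · rw [intervalIntegrable_iff_integrableOn_Ioc_of_le hab]
        exact (hkint a b).mono_set Set.Ioc_subset_Icc_self
    have h0 : 0 ≤ ∫ s in a..t₀, k s :=
      intervalIntegral.integral_nonneg ht₀I.1 fun s _ => hk0 s
    calc M ≤ (∫ s in a..t₀, k s) * M := hbd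
      _ ≤ 1/2 * M := by nlinarith
  have hM0 : M = 0 := by linarith
  intro t ht
  have h := hmax ht
  have : ‖u t - u' t‖ ≤ 0 := by
    simp only [hM] at hM0
    calc ‖u t - u' t‖ ≤ M := h
      _ = 0 := hM0
  have := le_antisymm this (norm_nonneg _)
  exact sub_eq_zero.1 (norm_eq_zero.1 this)

include hkint hmeas hlip hB hk0 in
theorem carath_chain (n : ℕ) : ∀ a b : ℝ, 0 ≤ a → a ≤ b →
    (∫ s in a..b, k s) ≤ (n : ℝ) / 2 → ∀ u₀ : W,
    (∃ u, Continuous u ∧ ∀ t ∈ Set.Icc a b, u t = u₀ + ∫ s in a..t, Φ s (u s)) ∧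
    (∀ u u' : ℝ → W, ContinuousOn u (Set.Icc a b) → ContinuousOn u' (Set.Icc a b) →
      (∀ t ∈ Set.Icc a b, u t = u₀ + ∫ s in a..t, Φ s (u s)) →
      (∀ t ∈ Set.Icc a b, u' t = u₀ + ∫ s in a..t, Φ s (u' s)) →
      Set.EqOn u u' (Set.Icc a b)) := by
  induction n with
  | zero =>
    intro a b ha hab hn u₀
    have hn' : (∫ s in a..b, k s) ≤ 1/2 := by
      simp only [Nat.cast_zero, zero_div] at hn
      linarith
    exact ⟨carath_loc_ex Φ k B hkint hmeas hlip hB hk0 ha hab hn' u₀,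
      fun u u' hu hu' h1 h2 =>
        carath_loc_uniq Φ k B hkint hmeas hlip hB hk0 ha hab hn' u₀ hu hu' h1 h2⟩
  | succ n ih =>
    intro a b ha hab hn u₀
    by_cases hsm : (∫ s in a..b, k s) ≤ 1/2
    · exact ⟨carath_loc_ex Φ k B hkint hmeas hlip hB hk0 ha hab hsm u₀,
        fun u u' hu hu' h1 h2 =>
          carath_loc_uniq Φ k B hkint hmeas hlip hB hk0 ha hab hsm u₀ hu hu' h1 h2⟩
    push_neg at hsm
    -- find c with ∫ a..c = 1/2
    have hkii : ∀ x y : ℝ, x ≤ y → IntervalIntegrable k volume x y := fun x y h => by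
      rw [intervalIntegrable_iff_integrableOn_Ioc_of_le h]
      exact (hkint x y).mono_set Set.Ioc_subset_Icc_self
    have hcont : ContinuousOn (fun t => ∫ s in a..t, k s) (Set.Icc a b) := by
      have := intervalIntegral.continuousOn_primitive_interval
        (μ := volume) (f := k) (a := a) (b := b) (by rw [Set.uIcc_of_le hab]; exact hkint a b)
      rwa [Set.uIcc_of_le hab] at this
    have hmem : (1/2 : ℝ) ∈ Set.Icc (∫ s in a..a, k s) (∫ s in a..b, k s) := by
      rw [intervalIntegral.integral_same]
      exact ⟨by norm_num, hsm.le⟩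
    obtain ⟨c, hcI, hc⟩ := intermediate_value_Icc hab hcont hmem
    have hac : a ≤ c := hcI.1
    have hcb : c ≤ b := hcI.2
    have hc0 : 0 ≤ c := ha.trans hac
    have hadd : (∫ s in a..c, k s) + (∫ s in c..b, k s) = ∫ s in a..b, k s :=
      intervalIntegral.integral_add_adjacent_intervals (hkii a c hac) (hkii c b hcb)
    have hrest : (∫ s in c..b, k s) ≤ (n : ℝ) / 2 := by
      have : (∫ s in a..c, k s) = 1/2 := hc
      push_cast at hn
      linarith
    obtain ⟨u₁, hu₁c, hu₁⟩ := carath_loc_ex Φ k B hkint hmeas hlip hB hk0 ha hac hc.le u₀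
    obtain ⟨⟨u₂, hu₂c, hu₂⟩, -⟩ := ih c b hc0 hcb hrest (u₁ c)
    have hu2c : u₂ c = u₁ c := by
      have := hu₂ c ⟨le_rfl, hcb⟩
      simpa using this
    constructor
    · -- existence: glue
      set u : ℝ → W := fun t => if t ≤ c then u₁ t else u₂ t with hu
      have hucont : Continuous u := by
        refine Continuous.if_le hu₁c hu₂c continuous_id continuous_const fun t htc => ?_
        rw [htc, hu2c]
      have huleft : ∀ s : ℝ, s ≤ c → u s = u₁ s := fun s hs => if_pos hs
      have huright : ∀ s : ℝ, c ≤ s → u s = u₂ s := by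
        intro s hs
        rcases eq_or_lt_of_le hs with h | h
        · rw [← h, huleft c le_rfl, hu2c]
        · exact if_neg (not_le.2 h)
      -- integrability pieces
      have hphiu : IntegrableOn (fun s => Φ s (u s)) (Set.Icc a b) :=
        phi_integrableOn Φ k B hkint hmeas hlip hB hk0 ha hucont.continuousOn
      have hphii : ∀ x y : ℝ, a ≤ x → x ≤ y → y ≤ b →
          IntervalIntegrable (fun s => Φ s (u s)) volume x y := by
        intro x y hx hxy hyb
        rw [intervalIntegrable_iff_integrableOn_Ioc_of_le hxy]
        exact hphiu.mono_set (Set.Ioc_subset_Icc_self.trans (Set.Icc_subset_Icc hx hyb))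
      refine ⟨u, hucont, fun t ht => ?_⟩
      by_cases htc : t ≤ c
      · rw [huleft t htc, hu₁ t ⟨ht.1, htc⟩]
        congr 1
        refine intervalIntegral.integral_congr fun s hs => ?_
        rw [Set.uIcc_of_le ht.1] at hs
        rw [huleft s (hs.2.trans htc)]
      · push_neg at htc
        have hct : c ≤ t := htc.le
        have e1 : (∫ s in a..c, Φ s (u₁ s)) = ∫ s in a..c, Φ s (u s) := by
          refine intervalIntegral.integral_congr fun s hs => ?_
          rw [Set.uIcc_of_le hac] at hs
          rw [huleft s hs.2]
        have e2 : (∫ s in c..t, Φ s (u₂ s)) = ∫ s in c..t, Φ s (u s) := by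
          refine intervalIntegral.integral_congr fun s hs => ?_
          rw [Set.uIcc_of_le hct] at hs
          rw [huright s hs.1]
        have hadd2 : (∫ s in a..c, Φ s (u s)) + ∫ s in c..t, Φ s (u s)
            = ∫ s in a..t, Φ s (u s) :=
          intervalIntegral.integral_add_adjacent_intervals
            (hphii a c le_rfl hac hcb) (hphii c t hac hct ht.2)
        rw [huright t hct, hu₂ t ⟨hct, ht.2⟩, hu₁ c ⟨hac, le_rfl⟩, e1, e2, add_assoc, hadd2]
    · -- uniqueness
      intro u u' hu hu' h1 h2
      have hIac : Set.Icc a c ⊆ Set.Icc a b := Set.Icc_subset_Icc_right hcb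
      have hIcb : Set.Icc c b ⊆ Set.Icc a b := Set.Icc_subset_Icc_left hac
      have e1 : Set.EqOn u u' (Set.Icc a c) := by
        refine carath_loc_uniq Φ k B hkint hmeas hlip hB hk0 ha hac hc.le u₀
          (hu.mono hIac) (hu'.mono hIac) (fun t ht => h1 t (hIac ht))
          (fun t ht => h2 t (hIac ht))
      have hucc : u c = u' c := e1 ⟨hac, le_rfl⟩
      -- translate to initial value u c on [c, b]
      have shift : ∀ w : ℝ → W, ContinuousOn w (Set.Icc a b) →
          (∀ t ∈ Set.Icc a b, w t = u₀ + ∫ s in a..t, Φ s (w s)) →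
          ∀ t ∈ Set.Icc c b, w t = w c + ∫ s in c..t, Φ s (w s) := by
        intro w hwc hweq t ht
        have hphiw : IntegrableOn (fun s => Φ s (w s)) (Set.Icc a b) :=
          phi_integrableOn Φ k B hkint hmeas hlip hB hk0 ha hwc
        have hphii : ∀ x y : ℝ, a ≤ x → x ≤ y → y ≤ b →
            IntervalIntegrable (fun s => Φ s (w s)) volume x y := by
          intro x y hx hxy hyb
          rw [intervalIntegrable_iff_integrableOn_Ioc_of_le hxy]
          exact hphiw.mono_set (Set.Ioc_subset_Icc_self.trans (Set.Icc_subset_Icc hx hyb))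
        have hadd3 : (∫ s in a..c, Φ s (w s)) + ∫ s in c..t, Φ s (w s)
            = ∫ s in a..t, Φ s (w s) :=
          intervalIntegral.integral_add_adjacent_intervals
            (hphii a c le_rfl hac hcb) (hphii c t hac ht.1 ht.2)
        rw [hweq t ⟨hac.trans ht.1, ht.2⟩, hweq c ⟨hac, hcb⟩, add_assoc, hadd3]
      have e2 : Set.EqOn u u' (Set.Icc c b) := by
        obtain ⟨-, uniq2⟩ := ih c b hc0 hcb hrest (u c)
        refine uniq2 u u' (hu.mono hIcb) (hu'.mono hIcb) (shift u hu h1) ?_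
        intro t ht
        rw [hucc]
        exact shift u' hu' h2 t ht
      intro t ht
      rcases le_total t c with h | h
      · exact e1 ⟨ht.1, h⟩
      · exact e2 ⟨h, ht.2⟩

include hkint hmeas hlip hB hk0 in
theorem carath_global (u₀ : W) :
    ∃ u : ℝ → W,
      (∀ q : ℝ, 0 ≤ q → ContinuousOn u (Set.Icc 0 q)) ∧
      (∀ q : ℝ, 0 ≤ q → ∀ t ∈ Set.Icc 0 q, u t = u₀ + ∫ s in (0:ℝ)..t, Φ s (u s)) ∧
      (∀ (u' : ℝ → W) (q : ℝ), 0 ≤ q → ContinuousOn u' (Set.Icc 0 q) →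
        (∀ t ∈ Set.Icc 0 q, u' t = u₀ + ∫ s in (0:ℝ)..t, Φ s (u' s)) →
        Set.EqOn u' u (Set.Icc 0 q)) := by
  have main : ∀ b : ℝ, 0 ≤ b →
      (∃ u, Continuous u ∧ ∀ t ∈ Set.Icc 0 b, u t = u₀ + ∫ s in (0:ℝ)..t, Φ s (u s)) ∧
      (∀ u u' : ℝ → W, ContinuousOn u (Set.Icc 0 b) → ContinuousOn u' (Set.Icc 0 b) →
        (∀ t ∈ Set.Icc 0 b, u t = u₀ + ∫ s in (0:ℝ)..t, Φ s (u s)) →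
        (∀ t ∈ Set.Icc 0 b, u' t = u₀ + ∫ s in (0:ℝ)..t, Φ s (u' s)) →
        Set.EqOn u u' (Set.Icc 0 b)) := by
    intro b hb
    refine carath_chain Φ k B hkint hmeas hlip hB hk0 ⌈2 * ∫ s in (0:ℝ)..b, k s⌉₊ 0 b
      le_rfl hb ?_ u₀
    have h1 : (2 * ∫ s in (0:ℝ)..b, k s) ≤ (⌈2 * ∫ s in (0:ℝ)..b, k s⌉₊ : ℝ) := Nat.le_ceil _
    linarith
  choose! sol hsolc hsole using fun b (hb : (0:ℝ) ≤ b) => (main b hb).1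
  set u : ℝ → W := fun t => sol t t with hudef
  have hconsist : ∀ b : ℝ, 0 ≤ b → Set.EqOn u (sol b) (Set.Icc 0 b) := by
    intro b hb t ht
    have ht0 : (0:ℝ) ≤ t := ht.1
    have h2 : ∀ s ∈ Set.Icc (0:ℝ) t, sol b s = u₀ + ∫ r in (0:ℝ)..s, Φ r (sol b r) :=
      fun s hs => hsole b hb s ⟨hs.1, hs.2.trans ht.2⟩
    have heq := (main t ht0).2 (sol t) (sol b) (hsolc t ht0).continuousOn
      (hsolc b hb).continuousOn (hsole t ht0) h2
    exact heq ⟨ht0, le_rfl⟩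
  refine ⟨u, ?_, ?_, ?_⟩
  · intro q hq
    exact ((hsolc q hq).continuousOn).congr (hconsist q hq)
  · intro q hq t ht
    rw [hconsist q hq ht, hsole q hq t ht]
    congr 1
    refine intervalIntegral.integral_congr fun s hs => ?_
    rw [Set.uIcc_of_le ht.1] at hs
    exact congrArg (Φ s) (hconsist q hq ⟨hs.1, hs.2.trans ht.2⟩).symm
  · intro u' q hq hu' he'
    have heq := (main q hq).2 u' (sol q) hu' (hsolc q hq).continuousOn he' (hsole q hq)
    intro t ht
    rw [heq ht]
    exact (hconsist q hq ht).symm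

end Carath

/-- A strong global solution of the second-order dynamical system
`ẍ(t) + σ(t) ẋ(t) + τ(t) (V(x(t)) − P_{ψ(x(t))}(V(x(t)) − μ x(t))) = 0`,
`x(0) = a₀`, `ẋ(0) = b₀`, encoded via a derivative `v = ẋ` and a second derivative `w = ẍ`:
`x` and `v` are absolutely continuous on every compact interval `[0, q]` (they are integrals
of locally integrable functions), the equation holds for almost every `t ≥ 0`, and the
initial conditions hold. -/
def IsStrongGlobalSolution {d : ℕ} (σ τ : ℝ → ℝ)
    (ψ : EuclideanSpace ℝ (Fin d) → Set (EuclideanSpace ℝ (Fin d)))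
    (V : EuclideanSpace ℝ (Fin d) → EuclideanSpace ℝ (Fin d)) (μ : ℝ)
    (a₀ b₀ : EuclideanSpace ℝ (Fin d)) (x v : ℝ → EuclideanSpace ℝ (Fin d)) : Prop :=
  x 0 = a₀ ∧ v 0 = b₀ ∧
    (∀ q : ℝ, 0 < q → IntegrableOn v (Set.Icc 0 q)) ∧
    (∀ t : ℝ, 0 ≤ t → x t = a₀ + ∫ s in (0:ℝ)..t, v s) ∧
    ∃ w : ℝ → EuclideanSpace ℝ (Fin d),
      (∀ q : ℝ, 0 < q → IntegrableOn w (Set.Icc 0 q)) ∧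
      (∀ t : ℝ, 0 ≤ t → v t = b₀ + ∫ s in (0:ℝ)..t, w s) ∧
      ∀ᵐ t ∂(volume.restrict (Set.Ici (0:ℝ))),
        w t + σ t • v t + τ t • (V (x t) - metricProj (ψ (x t)) (V (x t) - μ • x t)) = 0

set_option maxHeartbeats 1000000

/-- Existence and uniqueness of the strong global solution of the second-order
dynamical system, for measurable, locally integrable, nonnegative coefficients `σ, τ`. -/
theorem stmt_5 {d : ℕ} (σ τ : ℝ → ℝ)
    (hσmeas : Measurable σ) (hτmeas : Measurable τ)
    (hσnonneg : ∀ t, 0 ≤ t → 0 ≤ σ t) (hτnonneg : ∀ t, 0 ≤ t → 0 ≤ τ t)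
    (hσint : ∀ s : ℝ, 0 < s → IntegrableOn σ (Set.Icc 0 s))
    (hτint : ∀ s : ℝ, 0 < s → IntegrableOn τ (Set.Icc 0 s))
    (ψ : EuclideanSpace ℝ (Fin d) → Set (EuclideanSpace ℝ (Fin d)))
    (V : EuclideanSpace ℝ (Fin d) → EuclideanSpace ℝ (Fin d)) (L η μ ρ : ℝ)
    (hΓ₁ : ∀ x, (ψ x).Nonempty ∧ IsClosed (ψ x) ∧ Convex ℝ (ψ x))
    (hL : ∀ y z, ‖V y - V z‖ ≤ L * ‖y - z‖)
    (hη : ∀ y z, η * ‖y - z‖ ^ 2 ≤ ⟪V y - V z, y - z⟫)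
    (hμ : 0 < μ) (hρ : 0 < ρ)
    (hproj : ∀ y r s, ‖metricProj (ψ r) y - metricProj (ψ s) y‖ ≤ ρ * ‖r - s‖)
    (a₀ b₀ : EuclideanSpace ℝ (Fin d)) :
    ∃ x v : ℝ → EuclideanSpace ℝ (Fin d),
      IsStrongGlobalSolution σ τ ψ V μ a₀ b₀ x v ∧
      ∀ x₂ v₂ : ℝ → EuclideanSpace ℝ (Fin d),
        IsStrongGlobalSolution σ τ ψ V μ a₀ b₀ x₂ v₂ → ∀ t : ℝ, 0 ≤ t → x₂ t = x t := by
  classical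
  set F : EuclideanSpace ℝ (Fin d) → EuclideanSpace ℝ (Fin d) :=
    fun x => V x - metricProj (ψ x) (V x - μ • x) with hF
  set C : ℝ := |L| + |L| + ρ + μ + 1 with hC
  have habs : (0:ℝ) ≤ |L| := abs_nonneg L
  have hC1 : (1:ℝ) ≤ C := by simp only [hC]; linarith
  have hC0 : (0:ℝ) ≤ C := by linarith
  have hFlip : ∀ x y, ‖F x - F y‖ ≤ C * ‖x - y‖ := by
    intro x y
    have h1 : ‖V x - V y‖ ≤ |L| * ‖x - y‖ :=
      (hL x y).trans (mul_le_mul_of_nonneg_right (le_abs_self L) (norm_nonneg _))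
    have h2 : ‖metricProj (ψ x) (V x - μ • x) - metricProj (ψ y) (V x - μ • x)‖
        ≤ ρ * ‖x - y‖ := hproj (V x - μ • x) x y
    have h3 : ‖metricProj (ψ y) (V x - μ • x) - metricProj (ψ y) (V y - μ • y)‖
        ≤ ‖(V x - μ • x) - (V y - μ • y)‖ :=
      metricProj_nonexpansive (hΓ₁ y).1 (hΓ₁ y).2.1 (hΓ₁ y).2.2 _ _
    have h4 : ‖(V x - μ • x) - (V y - μ • y)‖ ≤ |L| * ‖x - y‖ + μ * ‖x - y‖ := by
      have e : (V x - μ • x) - (V y - μ • y) = (V x - V y) - μ • (x - y) := by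
        rw [smul_sub]; abel
      rw [e]
      refine (norm_sub_le _ _).trans ?_
      rw [norm_smul, Real.norm_eq_abs, abs_of_pos hμ]
      linarith
    have h5 : ‖metricProj (ψ x) (V x - μ • x) - metricProj (ψ y) (V y - μ • y)‖
        ≤ ρ * ‖x - y‖ + (|L| * ‖x - y‖ + μ * ‖x - y‖) :=
      (norm_sub_le_norm_sub_add_norm_sub _ _ _).trans (add_le_add h2 (h3.trans h4))
    have h6 : ‖F x - F y‖ ≤ ‖V x - V y‖ +
        ‖metricProj (ψ x) (V x - μ • x) - metricProj (ψ y) (V y - μ • y)‖ := by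
      simp only [hF]
      have e : (V x - metricProj (ψ x) (V x - μ • x)) - (V y - metricProj (ψ y) (V y - μ • y))
          = (V x - V y) -
            (metricProj (ψ x) (V x - μ • x) - metricProj (ψ y) (V y - μ • y)) := by abel
      rw [e]
      exact norm_sub_le _ _
    have hn : 0 ≤ ‖x - y‖ := norm_nonneg _
    simp only [hC]
    nlinarith
  have hFcont : Continuous F := by
    have hlw : LipschitzWith (Real.toNNReal C) F := by
      refine LipschitzWith.of_dist_le_mul fun x y => ?_
      rw [dist_eq_norm, dist_eq_norm, Real.coe_toNNReal C hC0]
      exact hFlip x y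
    exact hlw.continuous
  set B : ℝ := ‖F 0‖ with hBdef
  set k : ℝ → ℝ := (Set.Ici (0:ℝ)).indicator (fun s => 1 + σ s + C * τ s) with hkdef
  set Φ : ℝ → (EuclideanSpace ℝ (Fin d) × EuclideanSpace ℝ (Fin d)) →
      (EuclideanSpace ℝ (Fin d) × EuclideanSpace ℝ (Fin d)) :=
    fun s y => (y.2, -(σ s • y.2 + τ s • F y.1)) with hΦdef
  have hkval : ∀ s : ℝ, 0 ≤ s → k s = 1 + σ s + C * τ s := fun s hs =>
    Set.indicator_of_mem hs _
  have hk0 : ∀ s, 0 ≤ k s := by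
    intro s
    refine Set.indicator_nonneg (fun r hr => ?_) s
    have h1 := hσnonneg r hr
    have h2 := hτnonneg r hr
    nlinarith
  have hkint : ∀ a b : ℝ, IntegrableOn k (Set.Icc a b) := by
    intro a b
    have hMpos : (0:ℝ) < max b 1 := lt_of_lt_of_le one_pos (le_max_right _ _)
    have hg : IntegrableOn (fun s => 1 + σ s + C * τ s) (Set.Icc 0 (max b 1)) := by
      refine Integrable.add (Integrable.add ?_ ?_) ?_
      · exact integrableOn_const measure_Icc_lt_top.ne
      · exact hσint (max b 1) hMpos
      · exact (hτint (max b 1) hMpos).const_mul C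
    refine (integrable_indicator_iff measurableSet_Ici).2 ?_
    rw [IntegrableOn, Measure.restrict_restrict measurableSet_Ici]
    exact hg.mono_set fun z hz => ⟨hz.1, hz.2.2.trans (le_max_left b 1)⟩
  have hmeas : ∀ (u : ℝ → EuclideanSpace ℝ (Fin d) × EuclideanSpace ℝ (Fin d)) (a b : ℝ),
      ContinuousOn u (Set.Icc a b) →
      AEStronglyMeasurable (fun s => Φ s (u s)) (volume.restrict (Set.Icc a b)) := by
    intro u a b hu
    have hu' : AEStronglyMeasurable u (volume.restrict (Set.Icc a b)) :=
      hu.aestronglyMeasurable measurableSet_Icc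
    have h1 : AEStronglyMeasurable (fun s => (u s).1) (volume.restrict (Set.Icc a b)) :=
      continuous_fst.comp_aestronglyMeasurable hu'
    have h2 : AEStronglyMeasurable (fun s => (u s).2) (volume.restrict (Set.Icc a b)) :=
      continuous_snd.comp_aestronglyMeasurable hu'
    refine AEStronglyMeasurable.prodMk h2 (AEStronglyMeasurable.neg ?_)
    exact (hσmeas.aestronglyMeasurable.smul h2).add
      (hτmeas.aestronglyMeasurable.smul (hFcont.comp_aestronglyMeasurable h1))
  have hlip : ∀ s : ℝ, 0 ≤ s →
      ∀ y y' : EuclideanSpace ℝ (Fin d) × EuclideanSpace ℝ (Fin d),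
      ‖Φ s y - Φ s y'‖ ≤ k s * ‖y - y'‖ := by
    intro s hs y y'
    rw [hkval s hs]
    have hσs := hσnonneg s hs
    have hτs := hτnonneg s hs
    have hn : 0 ≤ ‖y - y'‖ := norm_nonneg _
    have hsub : Φ s y - Φ s y'
        = (y.2 - y'.2, -(σ s • (y.2 - y'.2) + τ s • (F y.1 - F y'.1))) := by
      simp only [hΦdef, Prod.mk_sub_mk, smul_sub]
      refine congrArg _ ?_
      abel
    rw [hsub, Prod.norm_def]
    dsimp only
    have hsnd : ‖y.2 - y'.2‖ ≤ ‖y - y'‖ := by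
      have := norm_snd_le (y - y')
      simpa using this
    have hfst : ‖y.1 - y'.1‖ ≤ ‖y - y'‖ := by
      have := norm_fst_le (y - y')
      simpa using this
    refine sup_le ?_ ?_
    · nlinarith [mul_nonneg hσs hn, mul_nonneg (mul_nonneg hC0 hτs) hn]
    · rw [norm_neg]
      refine (norm_add_le _ _).trans ?_
      rw [norm_smul, norm_smul, Real.norm_eq_abs, Real.norm_eq_abs,
        abs_of_nonneg hσs, abs_of_nonneg hτs]
      have hFb : ‖F y.1 - F y'.1‖ ≤ C * ‖y - y'‖ := (hFlip _ _).trans (by nlinarith)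
      nlinarith [mul_le_mul_of_nonneg_left hsnd hσs,
        mul_le_mul_of_nonneg_left hFb hτs]
  have hBbd : ∀ s : ℝ, 0 ≤ s → ‖Φ s 0‖ ≤ k s * B := by
    intro s hs
    rw [hkval s hs]
    have hτs := hτnonneg s hs
    have hσs := hσnonneg s hs
    have hBnn : (0:ℝ) ≤ B := norm_nonneg _
    have h0 : Φ s 0 = (0, -(τ s • F 0)) := by
      simp [hΦdef]
    rw [h0, Prod.norm_def]
    dsimp only
    refine sup_le (by
      simp only [norm_zero]
      nlinarith [mul_nonneg hσs hBnn, mul_nonneg (mul_nonneg hC0 hτs) hBnn]) ?_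
    rw [norm_neg, norm_smul, Real.norm_eq_abs, abs_of_nonneg hτs]
    simp only [hBdef]
    have ht2 : τ s ≤ 1 + σ s + C * τ s := by
      nlinarith [mul_nonneg (sub_nonneg.2 hC1) hτs]
    exact mul_le_mul_of_nonneg_right ht2 (norm_nonneg _)
  have hsplit : ∀ (f : ℝ → EuclideanSpace ℝ (Fin d) × EuclideanSpace ℝ (Fin d)) (t : ℝ),
      IntervalIntegrable f volume 0 t →
      (∫ s in (0:ℝ)..t, f s)
        = ((∫ s in (0:ℝ)..t, (f s).1), (∫ s in (0:ℝ)..t, (f s).2)) := by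
    intro f t hf
    have h1 := (ContinuousLinearMap.fst ℝ (EuclideanSpace ℝ (Fin d))
      (EuclideanSpace ℝ (Fin d))).intervalIntegral_comp_comm hf
    have h2 := (ContinuousLinearMap.snd ℝ (EuclideanSpace ℝ (Fin d))
      (EuclideanSpace ℝ (Fin d))).intervalIntegral_comp_comm hf
    simp only [ContinuousLinearMap.coe_fst', ContinuousLinearMap.coe_snd'] at h1 h2
    refine Prod.ext ?_ ?_
    · exact h1.symm
    · exact h2.symm
  obtain ⟨u, hucont, hueq, huuniq⟩ := carath_global Φ k B hkint hmeas hlip hBbd hk0 (a₀, b₀)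
  have hphiII : ∀ (g : ℝ → EuclideanSpace ℝ (Fin d) × EuclideanSpace ℝ (Fin d)) (t : ℝ),
      0 ≤ t → ContinuousOn g (Set.Icc 0 t) →
      IntervalIntegrable (fun s => Φ s (g s)) volume 0 t := by
    intro g t ht hg
    rw [intervalIntegrable_iff_integrableOn_Ioc_of_le ht]
    exact (phi_integrableOn Φ k B hkint hmeas hlip hBbd hk0 le_rfl hg).mono_set
      Set.Ioc_subset_Icc_self
  have hu0 : u 0 = (a₀, b₀) := by
    have h := hueq 0 le_rfl 0 ⟨le_rfl, le_rfl⟩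
    simpa using h
  refine ⟨fun t => (u t).1, fun t => (u t).2, ⟨?_, ?_, ?_, ?_, ?_⟩, ?_⟩
  · beta_reduce
    rw [hu0]
  · beta_reduce
    rw [hu0]
  · intro q hq
    exact (continuous_snd.comp_continuousOn (hucont q hq.le)).integrableOn_Icc
  · intro t ht
    beta_reduce
    have h := hueq t ht t ⟨ht, le_rfl⟩
    have hii := hphiII u t ht (hucont t ht)
    rw [h, hsplit _ t hii]
    simp only [hΦdef, Prod.fst_add]
  · refine ⟨fun t => if 0 ≤ t then (Φ t (u t)).2 else 0, ?_, ?_, ?_⟩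
    · intro q hq
      have hsnd : IntegrableOn (fun s => (Φ s (u s)).2) (Set.Icc 0 q) :=
        (phi_integrableOn Φ k B hkint hmeas hlip hBbd hk0 le_rfl (hucont q hq.le)).snd
      exact hsnd.congr_fun (fun s hs => (if_pos hs.1).symm) measurableSet_Icc
    · intro t ht
      beta_reduce
      have h := hueq t ht t ⟨ht, le_rfl⟩
      have hii := hphiII u t ht (hucont t ht)
      rw [h, hsplit _ t hii]
      simp only [Prod.snd_add]
      congr 1
      refine intervalIntegral.integral_congr fun s hs => ?_
      rw [Set.uIcc_of_le ht] at hs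
      exact (if_pos hs.1).symm
    · refine (MeasureTheory.ae_restrict_iff' measurableSet_Ici).2
        (Filter.Eventually.of_forall fun t ht => ?_)
      beta_reduce
      have hw : (if (0:ℝ) ≤ t then (Φ t (u t)).2 else 0) = (Φ t (u t)).2 := if_pos ht
      rw [hw]
      simp only [hΦdef, hF]
      abel
  · rintro x₂ v₂ ⟨hx0, hv0, hvint, hxeq2, w₂, hwint2, hveq2, hae2⟩ t₀ ht₀
    have hq : (0:ℝ) < t₀ + 1 := by linarith
    have hw2i : IntegrableOn w₂ (Set.Icc 0 (t₀+1)) := hwint2 _ hq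
    have hv2i : IntegrableOn v₂ (Set.Icc 0 (t₀+1)) := hvint _ hq
    have hprim2 : ContinuousOn (fun t => ∫ s in (0:ℝ)..t, w₂ s) (Set.Icc 0 (t₀+1)) := by
      have h := intervalIntegral.continuousOn_primitive_interval (μ := volume) (a := 0)
        (b := t₀+1) (f := w₂) (by rw [Set.uIcc_of_le hq.le]; exact hw2i)
      rwa [Set.uIcc_of_le hq.le] at h
    have hv2cont : ContinuousOn v₂ (Set.Icc 0 (t₀+1)) :=
      ContinuousOn.congr (continuousOn_const.add hprim2) (fun t ht => hveq2 t ht.1)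
    have hprim1 : ContinuousOn (fun t => ∫ s in (0:ℝ)..t, v₂ s) (Set.Icc 0 (t₀+1)) := by
      have h := intervalIntegral.continuousOn_primitive_interval (μ := volume) (a := 0)
        (b := t₀+1) (f := v₂) (by rw [Set.uIcc_of_le hq.le]; exact hv2i)
      rwa [Set.uIcc_of_le hq.le] at h
    have hx2cont : ContinuousOn x₂ (Set.Icc 0 (t₀+1)) :=
      ContinuousOn.congr (continuousOn_const.add hprim1) (fun t ht => hxeq2 t ht.1)
    set u₂ : ℝ → EuclideanSpace ℝ (Fin d) × EuclideanSpace ℝ (Fin d) :=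
      fun t => (x₂ t, v₂ t) with hu₂def
    have hu₂cont : ContinuousOn u₂ (Set.Icc 0 (t₀+1)) := hx2cont.prodMk hv2cont
    have haeq : ∀ t : ℝ, 0 ≤ t →
        (∫ s in (0:ℝ)..t, w₂ s) = ∫ s in (0:ℝ)..t, (Φ s (u₂ s)).2 := by
      intro t ht
      refine intervalIntegral.integral_congr_ae ?_
      have h1 := (MeasureTheory.ae_restrict_iff' measurableSet_Ici).1 hae2
      filter_upwards [h1] with s hsI hsmem
      rw [Set.uIoc_of_le ht] at hsmem
      have h2 := hsI hsmem.1.le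
      rw [add_assoc] at h2
      have h3 := eq_neg_of_add_eq_zero_left h2
      rw [h3]
    have hsol₂ : ∀ t ∈ Set.Icc (0:ℝ) (t₀+1),
        u₂ t = (a₀, b₀) + ∫ s in (0:ℝ)..t, Φ s (u₂ s) := by
      intro t ht
      have hii := hphiII u₂ t ht.1 (hu₂cont.mono (Set.Icc_subset_Icc_right ht.2))
      rw [hsplit _ t hii, Prod.mk_add_mk]
      refine Prod.ext ?_ ?_
      · simp only [hΦdef, hu₂def]
        exact hxeq2 t ht.1
      · simp only
        rw [← haeq t ht.1]
        exact hveq2 t ht.1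
    have heq := huuniq u₂ (t₀+1) hq.le hu₂cont hsol₂ ⟨ht₀, by linarith⟩
    exact congrArg Prod.fst heq
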